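/- Let (Ω, μ) be a measure space, H a real inner product space, and 1 < p ≤ 2. Let σ₁, σ₂ : Ω → H be measurable functions in L^p (MemLp p) that are not almost-everywhere equal. Then ∫ ⟨F_p(σ₁(x)) − F_p(σ₂(x)), σ₁(x) − σ₂(x)⟩ dμ(x) > 0. -/

import Mathlib

open MeasureTheory Real
open scoped RealInnerProductSpace ENNReal

/-- The p-Laplacian-type map `F_p : H → H`, `F_p x = ‖x‖^(p-2) • x` for `x ≠ 0`,
`F_p 0 = 0`. -/
noncomputable def Fp {H : Type*} [NormedAddCommGroup H] [NormedSpace ℝ H] (p : ℝ) (x : H) : H :=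
  open scoped Classical in
  if x = 0 then 0 else ‖x‖ ^ (p - 2) • x

lemma Fp_eq {H : Type*} [NormedAddCommGroup H] [NormedSpace ℝ H] (p : ℝ) (x : H) :
    Fp p x = ‖x‖ ^ (p - 2) • x := by
  unfold Fp
  split_ifs with h
  · simp [h]
  · rfl

lemma norm_Fp {H : Type*} [NormedAddCommGroup H] [NormedSpace ℝ H] {p : ℝ} (hp : 1 < p) (x : H) :
    ‖Fp p x‖ = ‖x‖ ^ (p - 1) := by
  by_cases h : x = 0
  · simp [Fp, h, Real.zero_rpow (by linarith : p - 1 ≠ 0)]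
  · have hx : (0:ℝ) < ‖x‖ := norm_pos_iff.2 h
    rw [Fp_eq, norm_smul, Real.norm_eq_abs, abs_of_nonneg (Real.rpow_nonneg (norm_nonneg x) _),
      show p - 1 = p - 2 + 1 by ring, Real.rpow_add_one hx.ne' (p - 2)]

lemma inner_Fp_sub_pos {H : Type*} [NormedAddCommGroup H] [InnerProductSpace ℝ H] {p : ℝ}
    (hp : 1 < p) {a b : H} (hab : a ≠ b) :
    0 < ⟪Fp p a - Fp p b, a - b⟫ := by
  by_cases ha : a = 0
  · subst ha
    have hb : b ≠ 0 := fun h => hab h.symm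
    have hB : (0:ℝ) < ‖b‖ := norm_pos_iff.2 hb
    have : ⟪Fp p 0 - Fp p b, (0:H) - b⟫ = ‖b‖ ^ (p-2) * ⟪b, b⟫ := by
      simp [Fp_eq, real_inner_smul_left]
    rw [this, real_inner_self_eq_norm_sq]
    positivity
  by_cases hb : b = 0
  · subst hb
    have hA : (0:ℝ) < ‖a‖ := norm_pos_iff.2 ha
    have : ⟪Fp p a - Fp p 0, a - (0:H)⟫ = ‖a‖ ^ (p-2) * ⟪a, a⟫ := by
      simp [Fp_eq, real_inner_smul_left]
    rw [this, real_inner_self_eq_norm_sq]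
    positivity
  -- both nonzero
  have hA : (0:ℝ) < ‖a‖ := norm_pos_iff.2 ha
  have hB : (0:ℝ) < ‖b‖ := norm_pos_iff.2 hb
  set A := ‖a‖ with hAdef
  set B := ‖b‖ with hBdef
  set t := ⟪a, b⟫ with htdef
  have hx : (0:ℝ) < A ^ (p-2) := Real.rpow_pos_of_pos hA _
  have hy : (0:ℝ) < B ^ (p-2) := Real.rpow_pos_of_pos hB _
  have ht : t ≤ A * B := real_inner_le_norm a b
  have h1 : ⟪Fp p a, a - b⟫ = A ^ (p-2) * A^2 - A ^ (p-2) * t := by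
    rw [Fp_eq, real_inner_smul_left, inner_sub_right, real_inner_self_eq_norm_sq]
    ring
  have h2 : ⟪Fp p b, a - b⟫ = B ^ (p-2) * t - B ^ (p-2) * B^2 := by
    rw [Fp_eq, real_inner_smul_left, inner_sub_right, real_inner_self_eq_norm_sq,
      real_inner_comm a b]
    ring
  have hexp : ⟪Fp p a - Fp p b, a - b⟫
      = A ^ (p-2) * A^2 + B ^ (p-2) * B^2 - (A ^ (p-2) + B ^ (p-2)) * t := by
    rw [inner_sub_left, h1, h2]
    ring
  have hxa : A ^ (p-2) * A = A ^ (p-1) := by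
    rw [show p - 1 = p - 2 + 1 by ring, Real.rpow_add_one hA.ne' (p-2)]
  have hyb : B ^ (p-2) * B = B ^ (p-1) := by
    rw [show p - 1 = p - 2 + 1 by ring, Real.rpow_add_one hB.ne' (p-2)]
  rw [hexp]
  rcases eq_or_ne A B with hAB | hAB
  · -- equal norms: Cauchy–Schwarz must be strict
    have htlt : t < A * B := by
      rcases lt_or_eq_of_le ht with h | h
      · exact h
      · exfalso
        have h3 := inner_eq_norm_mul_iff_real.mp h
        rw [← hAdef, ← hBdef, hAB] at h3
        exact hab (smul_right_injective H (hAB ▸ hA).ne' h3)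
    rw [← hAB] at htlt ⊢
    nlinarith [mul_pos hx (sub_pos.2 htlt)]
  · have hs : 0 < (A ^ (p-1) - B ^ (p-1)) * (A - B) := by
      rcases hAB.lt_or_gt with h | h
      · have := Real.rpow_lt_rpow hA.le h (by linarith : (0:ℝ) < p - 1)
        nlinarith
      · have := Real.rpow_lt_rpow hB.le h (by linarith : (0:ℝ) < p - 1)
        nlinarith
    nlinarith [mul_nonneg (add_pos hx hy).le (sub_nonneg.2 ht)]

/-- Strict monotonicity of the Gâteaux derivative of the viscous energy functional on `L^p`:
for `1 < p ≤ 2` and `σ₁, σ₂ ∈ L^p(Ω; H)` that are not a.e. equal,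
`∫ ⟨F_p(σ₁) − F_p(σ₂), σ₁ − σ₂⟩ dμ > 0`. -/
theorem integral_Fp_strictMonotone {Ω H : Type*} [MeasurableSpace Ω]
    [NormedAddCommGroup H] [InnerProductSpace ℝ H] (μ : Measure Ω)
    (p : ℝ) (hp1 : 1 < p) (hp2 : p ≤ 2) (σ₁ σ₂ : Ω → H)
    (h₁ : MemLp σ₁ (ENNReal.ofReal p) μ) (h₂ : MemLp σ₂ (ENNReal.ofReal p) μ)
    (hne : ¬ σ₁ =ᵐ[μ] σ₂) :
    0 < ∫ x, ⟪Fp p (σ₁ x) - Fp p (σ₂ x), σ₁ x - σ₂ x⟫ ∂μ := by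
  have hp0 : (0:ℝ) < p := by linarith
  have hp1' : (0:ℝ) < p - 1 := by linarith
  set P := ENNReal.ofReal p with hP
  set Q := ENNReal.ofReal (p / (p - 1)) with hQ
  -- AESM of Fp ∘ σᵢ
  have haesm : ∀ σ : Ω → H, AEStronglyMeasurable σ μ →
      AEStronglyMeasurable (fun x => Fp p (σ x)) μ := by
    intro σ hσ
    have : AEStronglyMeasurable (fun x => (‖σ x‖ ^ (p-2)) • σ x) μ :=
      ((hσ.norm.aemeasurable.pow_const (p-2)).aestronglyMeasurable).smul hσ
    simpa only [← Fp_eq] using this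
  -- MemLp of Fp ∘ σᵢ at exponent Q
  have hmem : ∀ σ : Ω → H, MemLp σ P μ → MemLp (fun x => Fp p (σ x)) Q μ := by
    intro σ hσ
    have hd : MemLp (fun x => ‖σ x‖ ^ (ENNReal.ofReal (p-1)).toReal) (P / ENNReal.ofReal (p-1)) μ :=
      hσ.norm_rpow_div (ENNReal.ofReal (p-1))
    rw [ENNReal.toReal_ofReal hp1'.le] at hd
    have hPQ : P / ENNReal.ofReal (p-1) = Q := by
      rw [hQ, hP, ENNReal.ofReal_div_of_pos hp1']
    rw [hPQ] at hd
    refine hd.of_le (haesm σ hσ.1) (Filter.Eventually.of_forall fun x => ?_)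
    rw [norm_Fp hp1, Real.norm_eq_abs,
      abs_of_nonneg (Real.rpow_nonneg (norm_nonneg _) _)]
  have hG : MemLp (fun x => Fp p (σ₁ x) - Fp p (σ₂ x)) Q μ := (hmem σ₁ h₁).sub (hmem σ₂ h₂)
  have hD : MemLp (fun x => σ₁ x - σ₂ x) P μ := h₁.sub h₂
  -- Hölder: product of norms is integrable
  have hconj : (1 : ℝ≥0∞) / 1 = 1 / Q + 1 / P := by
    rw [hQ, hP, one_div, one_div, one_div,
      ← ENNReal.ofReal_inv_of_pos (by positivity : (0:ℝ) < p / (p-1)),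
      ← ENNReal.ofReal_inv_of_pos hp0, ← ENNReal.ofReal_add (by positivity) (by positivity)]
    rw [inv_one, ← ENNReal.ofReal_one]
    congr 1
    field_simp
    ring
  have hprod : Integrable (fun x => ‖Fp p (σ₁ x) - Fp p (σ₂ x)‖ * ‖σ₁ x - σ₂ x‖) μ := by
    have := (hD.norm).smul (hG.norm) (r := 1) (hpqr := ⟨by simpa only [one_div, inv_one] using hconj.symm⟩)
    rw [memLp_one_iff_integrable] at this
    exact this
  -- integrability of the integrand
  have hmeas : AEStronglyMeasurable (fun x => ⟪Fp p (σ₁ x) - Fp p (σ₂ x), σ₁ x - σ₂ x⟫) μ :=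
    AEStronglyMeasurable.inner hG.1 hD.1
  have hint : Integrable (fun x => ⟪Fp p (σ₁ x) - Fp p (σ₂ x), σ₁ x - σ₂ x⟫) μ := by
    refine hprod.mono' hmeas (Filter.Eventually.of_forall fun x => ?_)
    exact (abs_real_inner_le_norm _ _)
  -- nonnegativity and positivity on a set of positive measure
  have hnonneg : ∀ x, 0 ≤ ⟪Fp p (σ₁ x) - Fp p (σ₂ x), σ₁ x - σ₂ x⟫ := by
    intro x
    by_cases h : σ₁ x = σ₂ x
    · simp [h]
    · exact (inner_Fp_sub_pos hp1 h).le
  rw [integral_pos_iff_support_of_nonneg (fun x => hnonneg x) hint]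
  have hsub : {x | σ₁ x ≠ σ₂ x} ⊆ Function.support
      (fun x => ⟪Fp p (σ₁ x) - Fp p (σ₂ x), σ₁ x - σ₂ x⟫) :=
    fun x hx => (inner_Fp_sub_pos hp1 hx).ne'
  have hpos : 0 < μ {x | σ₁ x ≠ σ₂ x} := by
    rw [pos_iff_ne_zero]
    intro h
    exact hne (by rwa [Filter.EventuallyEq, ae_iff])
  exact hpos.trans_le (measure_mono hsub)
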